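/- Let p, ℓ ≥ 1, let Λ ∈ ℝ^{p×p} with I_p − Λ invertible, let Γ ∈ ℝ^{p×ℓ}, and let v ∈ {1,…,p}, w ∈ {1,…,ℓ} with Γ_{vw} = 1. Set B = (I_p − Λ)^{-1}(I_p | Γ), let S ∈ ℝ^{(p+ℓ)×(p+ℓ)} be the permutation matrix that swaps coordinates v and p+w, and define Λ' = Λ + (Γ_{:,w} − e_v)·(I_p − Λ)_{v,:} (the outer product of the column vector Γ_{:,w} − e_v with the v-th row of I_p − Λ) and Γ' ∈ ℝ^{p×ℓ} by Γ'_{:,j} = Γ_{:,j} − Γ_{vj}(Γ_{:,w} − e_v) for j ≠ w and Γ'_{:,w} = 2e_v − Γ_{:,w}. Then (I_p − Λ')·(B S) = (I_p | Γ'). Entrywise, Λ'_{ij} = Λ_{ij} + (Γ_{iw} − δ_{iv})(δ_{vj} − Λ_{vj}), Γ'_{ij} = Γ_{ij} − Γ_{vj}(Γ_{iw} − δ_{iv}) for j ≠ w, and Γ'_{iw} = −Γ_{iw} + 2δ_{iv}, where δ is the Kronecker delta. -/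

import Mathlib

/-- Swapping the column of the path matrix `B = (I − Λ)⁻¹(I | Γ)` belonging to observed
variable `v` with the column belonging to latent variable `w` (normalized so `Γ v w = 1`)
yields the path matrix of the modified parameter pair `(Λ', Γ')`, i.e.
`(I − Λ') ⬝ (B S) = (I | Γ')`, where `S` swaps coordinates `v` and `p + w`, and
`Λ'_{ij} = Λ_{ij} + (Γ_{iw} − δ_{iv})(δ_{vj} − Λ_{vj})`,
`Γ'_{ij} = Γ_{ij} − Γ_{vj}(Γ_{iw} − δ_{iv})` for `j ≠ w`, `Γ'_{iw} = −Γ_{iw} + 2δ_{iv}`. -/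
theorem swap_source_latent_column
    (p ℓ : ℕ) (hp : 1 ≤ p) (hℓ : 1 ≤ ℓ)
    (Λ : Matrix (Fin p) (Fin p) ℝ) (hΛ : IsUnit (1 - Λ))
    (Γ : Matrix (Fin p) (Fin ℓ) ℝ)
    (v : Fin p) (w : Fin ℓ) (hΓvw : Γ v w = 1)
    (B : Matrix (Fin p) (Fin p ⊕ Fin ℓ) ℝ)
    (hB : B = (1 - Λ)⁻¹ * Matrix.fromCols 1 Γ)
    (Λ' : Matrix (Fin p) (Fin p) ℝ)
    (hΛ' : ∀ i j, Λ' i j =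
      Λ i j + (Γ i w - (if i = v then 1 else 0)) *
        ((if v = j then 1 else 0) - Λ v j))
    (Γ' : Matrix (Fin p) (Fin ℓ) ℝ)
    (hΓ' : ∀ i j, Γ' i j =
      if j = w then -Γ i w + 2 * (if i = v then 1 else 0)
      else Γ i j - Γ v j * (Γ i w - (if i = v then 1 else 0))) :
    (1 - Λ') * B.submatrix id (Equiv.swap (Sum.inl v) (Sum.inr w)) =
      Matrix.fromCols 1 Γ' := by
  set u : Fin p → ℝ := fun i => Γ i w - if i = v then 1 else 0 with hu
  set U : Matrix (Fin p) (Fin p) ℝ :=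
    Matrix.of (fun i k => u i * if k = v then 1 else 0) with hU
  have hUmul : ∀ {n : Type} [Fintype n] (M : Matrix (Fin p) n ℝ) (i : Fin p) (c : n),
      (U * M) i c = u i * M v c := by
    intro n _ M i c
    simp [Matrix.mul_apply, hU, ite_mul, mul_assoc]
  have h1 : (1 - Λ') = (1 - U) * (1 - Λ) := by
    rw [Matrix.sub_mul, Matrix.one_mul]
    ext i j
    have := hUmul (1 - Λ) i j
    simp only [Matrix.sub_apply, this, Matrix.one_apply, hΛ' i j, hu]
    ring
  have hdet : IsUnit (1 - Λ).det := (Matrix.isUnit_iff_isUnit_det _).mp hΛ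
  have h2 : (1 - Λ') * B = (1 - U) * Matrix.fromCols 1 Γ := by
    rw [hB, h1, Matrix.mul_assoc, ← Matrix.mul_assoc (1 - Λ),
      Matrix.mul_nonsing_inv _ hdet, Matrix.one_mul]
  have h3 : (1 - Λ') * B.submatrix id (Equiv.swap (Sum.inl v) (Sum.inr w)) =
      ((1 - Λ') * B).submatrix id (Equiv.swap (Sum.inl v) (Sum.inr w)) := rfl
  rw [h3, h2, Matrix.sub_mul, Matrix.one_mul]
  ext i j
  rw [Matrix.submatrix_apply, id_eq, Matrix.sub_apply, hUmul]
  cases j with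
  | inl j =>
    by_cases hj : j = v
    · subst hj
      rw [Equiv.swap_apply_left]
      simp only [Matrix.fromCols_apply_inr, Matrix.fromCols_apply_inl,
        Matrix.one_apply, hu, hΓvw]
      ring
    · rw [Equiv.swap_apply_of_ne_of_ne (by simp [hj]) (by simp)]
      simp only [Matrix.fromCols_apply_inl, Matrix.one_apply, hu]
      have hvj : ¬ v = j := fun h => hj h.symm
      simp [hvj]
  | inr j =>
    by_cases hj : j = w
    · subst hj
      rw [Equiv.swap_apply_right]
      simp only [Matrix.fromCols_apply_inl, Matrix.fromCols_apply_inr,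
        Matrix.one_apply, hΓ' i j, hu]
      simp only [eq_self_iff_true, if_true]
      ring
    · rw [Equiv.swap_apply_of_ne_of_ne (by simp) (by simp [hj])]
      simp only [Matrix.fromCols_apply_inr, hΓ' i j, if_neg hj, hu]
      ring
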